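/- Let X, Y be topological spaces and let T : C(X, ℝ) → C(Y, ℝ) be a lattice homomorphism. Then T(√(|f·g|)) = √(|T(f)·T(g)|) for all f, g ∈ C(X, ℝ). -/

import Mathlib

noncomputable def boxtimes {X : Type*} [TopologicalSpace X]
    (f g : C(X, ℝ)) : C(X, ℝ) :=
  ⟨fun x => Real.sqrt |f x * g x|, by continuity⟩

lemma inf_eq_half_smul {Z : Type*} [TopologicalSpace Z] (u v : C(Z, ℝ)) :
    u ⊓ v = (2:ℝ)⁻¹ • (u + v - |u - v|) := by
  ext x
  simp only [ContinuousMap.inf_apply, ContinuousMap.smul_apply,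
    ContinuousMap.sub_apply, ContinuousMap.add_apply, ContinuousMap.abs_apply,
    smul_eq_mul]
  rcases le_total (u x) (v x) with h | h
  · rw [min_eq_left h, abs_of_nonpos (by linarith)]; ring
  · rw [min_eq_right h, abs_of_nonneg (by linarith)]; ring

theorem stmt_15 {X Y : Type*} [TopologicalSpace X] [TopologicalSpace Y]
    (T : C(X, ℝ) →ₗ[ℝ] C(Y, ℝ))
    (hT : ∀ f : C(X, ℝ), T |f| = |T f|) :
    ∀ f g : C(X, ℝ), T (boxtimes f g) = boxtimes (T f) (T g) := by
  have hpos : ∀ f : C(X, ℝ), 0 ≤ f → 0 ≤ T f := by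
    intro f hf
    have h1 : |f| = f := abs_of_nonneg hf
    rw [← h1, hT]
    exact abs_nonneg _
  have hmono : ∀ f g : C(X, ℝ), f ≤ g → T f ≤ T g := by
    intro f g h
    have h0 : 0 ≤ T (g - f) := hpos _ (sub_nonneg.mpr h)
    rwa [map_sub, sub_nonneg] at h0
  have hmin : ∀ a b : C(X, ℝ), T (a ⊓ b) = T a ⊓ T b := by
    intro a b
    rw [inf_eq_half_smul a b, map_smul, map_sub, map_add, hT, map_sub, inf_eq_half_smul (T a) (T b)]
  intro f g
  have hbt_nonneg : (0 : C(X, ℝ)) ≤ boxtimes f g := by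
    intro x
    exact Real.sqrt_nonneg _
  ext y
  simp only [boxtimes, ContinuousMap.coe_mk]
  set u := |(T f) y| with hu
  set v := |(T g) y| with hv
  have hu0 : 0 ≤ u := abs_nonneg _
  have hv0 : 0 ≤ v := abs_nonneg _
  have habs : |(T f) y * (T g) y| = u * v := abs_mul _ _
  rw [habs]
  have key_t : ∀ a b : ℝ, 0 ≤ a → 0 ≤ b → 0 < a →
      Real.sqrt (b / a) * a = Real.sqrt (a * b) := by
    intro a b ha hb hapos
    rw [show a * b = (b / a) * a ^ 2 by field_simp,
      Real.sqrt_mul (by positivity), Real.sqrt_sq ha]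
  apply le_antisymm
  · -- upper bound
    have main : ∀ δ : ℝ, 0 < δ →
        T (boxtimes f g) y ≤ Real.sqrt ((u + δ) * (v + δ)) := by
      intro δ hδ
      set t := Real.sqrt ((v + δ) / (u + δ)) with ht
      have htpos : 0 < t := Real.sqrt_pos.mpr (by positivity)
      have hle : boxtimes f g ≤ (2:ℝ)⁻¹ • (t • |f| + t⁻¹ • |g|) := by
        intro x
        show Real.sqrt |f x * g x| ≤ 2⁻¹ * (t * |f x| + t⁻¹ * |g x|)
        have h1 : Real.sqrt |f x * g x| = Real.sqrt (t * |f x|) * Real.sqrt (t⁻¹ * |g x|) := by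
          rw [← Real.sqrt_mul (by positivity)]
          congr 1
          rw [abs_mul]
          field_simp
        rw [h1]
        have h2 := sq_nonneg (Real.sqrt (t * |f x|) - Real.sqrt (t⁻¹ * |g x|))
        have h3 : Real.sqrt (t * |f x|) ^ 2 = t * |f x| :=
          Real.sq_sqrt (by positivity)
        have h4 : Real.sqrt (t⁻¹ * |g x|) ^ 2 = t⁻¹ * |g x| :=
          Real.sq_sqrt (by positivity)
        nlinarith
      have hle2 := hmono _ _ hle
      have hle3 : T (boxtimes f g) y ≤ 2⁻¹ * (t * u) + 2⁻¹ * (t⁻¹ * v) := by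
        have := hle2 y
        simpa [map_smul, map_add, hT, ContinuousMap.smul_apply,
          ContinuousMap.add_apply, ContinuousMap.abs_apply, ← hu, ← hv] using this
      have e1 : t * (u + δ) = Real.sqrt ((u + δ) * (v + δ)) := by
        rw [ht]
        exact key_t (u + δ) (v + δ) (by positivity) (by positivity) (by positivity)
      have e2 : t⁻¹ * (v + δ) = Real.sqrt ((u + δ) * (v + δ)) := by
        rw [ht, ← Real.sqrt_inv, inv_div, mul_comm (u + δ) (v + δ)]
        exact key_t (v + δ) (u + δ) (by positivity) (by positivity) (by positivity)
      have h5 : t * u ≤ t * (u + δ) := by nlinarith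
      have h6 : t⁻¹ * v ≤ t⁻¹ * (v + δ) := by
        have h7 : (0:ℝ) < t⁻¹ := by positivity
        nlinarith
      linarith [hle3, h5, h6]
    have htend : Filter.Tendsto (fun δ : ℝ => Real.sqrt ((u + δ) * (v + δ)))
        (nhdsWithin 0 (Set.Ioi 0)) (nhds (Real.sqrt (u * v))) := by
      have hc : Continuous (fun δ : ℝ => Real.sqrt ((u + δ) * (v + δ))) :=
        Real.continuous_sqrt.comp
          ((continuous_const.add continuous_id).mul (continuous_const.add continuous_id))
      have := hc.tendsto 0
      simp only [add_zero] at this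
      exact this.mono_left nhdsWithin_le_nhds
    refine ge_of_tendsto htend ?_
    filter_upwards [self_mem_nhdsWithin] with δ hδ
    exact main δ hδ
  · -- lower bound
    rcases eq_or_lt_of_le hu0 with h | hupos
    · rw [← h, zero_mul, Real.sqrt_zero]
      exact hpos _ hbt_nonneg y
    rcases eq_or_lt_of_le hv0 with h | hvpos
    · rw [← h, mul_zero, Real.sqrt_zero]
      exact hpos _ hbt_nonneg y
    set t := Real.sqrt (v / u) with ht
    have htpos : 0 < t := Real.sqrt_pos.mpr (by positivity)
    have hle : (t • |f|) ⊓ (t⁻¹ • |g|) ≤ boxtimes f g := by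
      intro x
      show min (t * |f x|) (t⁻¹ * |g x|) ≤ Real.sqrt |f x * g x|
      have h1 : Real.sqrt |f x * g x| = Real.sqrt ((t * |f x|) * (t⁻¹ * |g x|)) := by
        congr 1
        rw [abs_mul]
        field_simp
      rw [h1]
      have hm0 : 0 ≤ min (t * |f x|) (t⁻¹ * |g x|) :=
        le_min (by positivity) (by positivity)
      rw [← Real.sqrt_mul_self hm0]
      apply Real.sqrt_le_sqrt
      exact mul_le_mul (min_le_left _ _) (min_le_right _ _) hm0 (by positivity)
    have hle2 := hmono _ _ hle
    rw [hmin, map_smul, map_smul, hT, hT] at hle2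
    have hle3 : min (t * u) (t⁻¹ * v) ≤ T (boxtimes f g) y := hle2 y
    have e1 : t * u = Real.sqrt (u * v) := by
      rw [ht]
      exact key_t u v hu0 hv0 hupos
    have e2 : t⁻¹ * v = Real.sqrt (u * v) := by
      rw [ht, ← Real.sqrt_inv, inv_div, mul_comm u v]
      exact key_t v u hv0 hu0 hvpos
    rw [e1, e2, min_self] at hle3
    exact hle3
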